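/- Let f : ℝ → ℝ be Lipschitz continuous and suppose that for every t the time-t flow map x ↦ φ(t, x) of the ODE u' = f(u) is a polynomial in x. Then there exist constants a, b ∈ ℝ such that f(u) = a·u + b for all u; in particular each φ(t, ·) is an affine (degree ≤ 1) polynomial. -/

import Mathlib

open Matrix

noncomputable def norm2 {n : ℕ} (v : Fin n → ℝ) : ℝ := Real.sqrt (∑ i, v i ^ 2)

def inner2 {n : ℕ} (u v : Fin n → ℝ) : ℝ := ∑ i, u i * v i

noncomputable def specNorm {m n : ℕ} (A : Matrix (Fin m) (Fin n) ℝ) : ℝ :=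
  ‖LinearMap.toContinuousLinearMap (Matrix.toEuclideanLin A)‖

theorem symPart_isHermitian {n : ℕ} (A : Matrix (Fin n) (Fin n) ℝ) :
    (((1:ℝ)/2) • (A + Aᵀ)).IsHermitian := by
  unfold Matrix.IsHermitian
  ext i j
  simp [Matrix.conjTranspose_apply, Matrix.transpose_apply]
  ring

/-- The logarithmic 2-norm: largest eigenvalue of the symmetric part (A + Aᵀ)/2. -/
noncomputable def mu2 {n : ℕ} (A : Matrix (Fin n) (Fin n) ℝ) : ℝ :=
  ⨆ i, (symPart_isHermitian A).eigenvalues i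

/-- The singular values of A: square roots of the eigenvalues of AᵀA. -/
noncomputable def singVals {m n : ℕ} (A : Matrix (Fin m) (Fin n) ℝ) : Fin n → ℝ :=
  fun i => Real.sqrt ((Matrix.isHermitian_conjTranspose_mul_self A).eigenvalues i)

/-- Semigroup property of the flow, from uniqueness of ODE solutions. -/
lemma flow_add (f : ℝ → ℝ) (K : NNReal) (hf : LipschitzWith K f)
    (φ : ℝ → ℝ → ℝ)
    (hinit : ∀ x : ℝ, φ 0 x = x)
    (hflow : ∀ (x t : ℝ), HasDerivAt (fun s => φ s x) (f (φ t x)) t)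
    (t x s : ℝ) : φ (t + s) x = φ s (φ t x) := by
  set F : ℝ → ℝ := fun u => φ (t + u) x with hFdef
  set G : ℝ → ℝ := fun u => φ u (φ t x) with hGdef
  have hF : ∀ u : ℝ, HasDerivAt F (f (F u)) u := by
    intro u
    have h1 := (hflow x (t + u)).comp u ((hasDerivAt_id u).const_add t)
    simpa [hFdef, Function.comp_def] using h1
  have hG : ∀ u : ℝ, HasDerivAt G (f (G u)) u := fun u => hflow (φ t x) u
  have habs : s ∈ Set.Icc (-(|s| + 1)) (|s| + 1) :=
    ⟨by nlinarith [neg_abs_le s, abs_nonneg s], by nlinarith [le_abs_self s]⟩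
  have h0 : (0 : ℝ) ∈ Set.Ioo (-(|s| + 1)) (|s| + 1) :=
    ⟨by nlinarith [abs_nonneg s], by nlinarith [abs_nonneg s]⟩
  have heq : Set.EqOn F G (Set.Icc (-(|s| + 1)) (|s| + 1)) := by
    apply ODE_solution_unique_of_mem_Icc
      (v := fun _ y => f y) (s := fun _ => Set.univ)
      (K := K) (fun _ _ => hf.lipschitzOnWith) h0
      (fun u _ => (hF u).continuousAt.continuousWithinAt)
      (fun u _ => hF u) (fun _ _ => trivial)
      (fun u _ => (hG u).continuousAt.continuousWithinAt)
      (fun u _ => hG u) (fun _ _ => trivial)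
    show φ (t + 0) x = φ 0 (φ t x)
    rw [add_zero, hinit]
  exact heq habs

theorem polynomial_flow_is_affine (f : ℝ → ℝ) (K : NNReal) (hf : LipschitzWith K f)
    (φ : ℝ → ℝ → ℝ)
    (hinit : ∀ x : ℝ, φ 0 x = x)
    (hflow : ∀ (x t : ℝ), HasDerivAt (fun s => φ s x) (f (φ t x)) t)
    (hpoly : ∀ t : ℝ, ∃ p : Polynomial ℝ, ∀ x : ℝ, φ t x = p.eval x) :
    ∃ a b : ℝ, (∀ u : ℝ, f u = a * u + b) ∧
      ∀ t : ℝ, ∃ p : Polynomial ℝ, p.degree ≤ 1 ∧ ∀ x : ℝ, φ t x = p.eval x := by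
  -- Step 1: every flow map is an affine polynomial
  have step1 : ∀ t : ℝ, ∃ p : Polynomial ℝ, p.degree ≤ 1 ∧ ∀ x : ℝ, φ t x = p.eval x := by
    intro t
    obtain ⟨p, hp⟩ := hpoly t
    obtain ⟨q, hq⟩ := hpoly (-t)
    have hinv : ∀ x : ℝ, q.eval (p.eval x) = x := by
      intro x
      have h := flow_add f K hf φ hinit hflow t x (-t)
      rw [add_neg_cancel, hinit] at h
      rw [← hp, ← hq, ← h]
    have hcomp : q.comp p = Polynomial.X := by
      apply Polynomial.funext
      intro r
      simp [Polynomial.eval_comp, hinv r]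
    have hdeg : q.natDegree * p.natDegree = 1 := by
      rw [← Polynomial.natDegree_comp, hcomp, Polynomial.natDegree_X]
    have hp1 : p.natDegree = 1 := Nat.eq_one_of_mul_eq_one_left hdeg
    refine ⟨p, ?_, hp⟩
    calc p.degree ≤ (p.natDegree : WithBot ℕ) := Polynomial.degree_le_natDegree
      _ = 1 := by rw [hp1]; rfl
  -- Step 2: affine representation of the flow
  have key : ∀ s x : ℝ, φ s x = x * (φ s 1 - φ s 0) + φ s 0 := by
    intro s x
    obtain ⟨p, hdeg, hp⟩ := step1 s
    have hrep := Polynomial.eq_X_add_C_of_degree_le_one hdeg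
    rw [hp, hp, hp, hrep]
    simp
    ring
  -- Step 3: differentiate at time 0
  refine ⟨f 1 - f 0, f 0, ?_, step1⟩
  intro u
  have h1 : HasDerivAt (fun s => φ s u) (f u) 0 := by
    have := hflow u 0
    rwa [hinit u] at this
  have h2 : HasDerivAt (fun s => u * (φ s 1 - φ s 0) + φ s 0)
      (u * (f 1 - f 0) + f 0) 0 := by
    have ha := hflow 1 0
    have hb := hflow 0 0
    rw [hinit 1] at ha
    rw [hinit 0] at hb
    exact (((ha.sub hb).const_mul u).add hb)
  have hfun : (fun s => φ s u) = (fun s => u * (φ s 1 - φ s 0) + φ s 0) :=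
    funext fun s => key s u
  rw [hfun] at h1
  have := h1.unique h2
  rw [this]; ring
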